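/- For every vertex v of a finite graph G with degree sequence d₁ ≥ d₂ ≥ ⋯ ≥ d_n, the number of paths on a vertices in G starting at v is at most d₁·d₂⋯d_{a−1}. -/

import Mathlib

section Aux

variable {V : Type*} [Fintype V] [DecidableEq V] (G : SimpleGraph V) [DecidableRel G.Adj]

/-- Encode a walk as a natural number via mixed-radix over indices of neighbors. -/
noncomputable def encodeWalk : {v u : V} → G.Walk v u → ℕ
  | _, _, SimpleGraph.Walk.nil => 0
  | v, _, @SimpleGraph.Walk.cons _ _ _ x _ _ w =>
      (G.neighborFinset v).toList.idxOf x + G.degree v * encodeWalk w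

/-- Product of degrees of all vertices of a walk except the last. -/
def walkProd : {v u : V} → G.Walk v u → ℕ
  | _, _, SimpleGraph.Walk.nil => 1
  | v, _, SimpleGraph.Walk.cons _ w => G.degree v * walkProd w

lemma encodeWalk_lt : ∀ {v u : V} (w : G.Walk v u), encodeWalk G w < walkProd G w
  | _, _, SimpleGraph.Walk.nil => Nat.zero_lt_one
  | v, _, @SimpleGraph.Walk.cons _ _ _ x _ h w => by
      have hx : x ∈ (G.neighborFinset v).toList :=
        Finset.mem_toList.2 ((G.mem_neighborFinset v x).2 h)
      have hidx : (G.neighborFinset v).toList.idxOf x < G.degree v := by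
        have := List.idxOf_lt_length_iff.2 hx
        rwa [Finset.length_toList] at this
      have he : encodeWalk G w < walkProd G w := encodeWalk_lt w
      rw [encodeWalk, walkProd]
      calc (G.neighborFinset v).toList.idxOf x + G.degree v * encodeWalk G w
          < G.degree v + G.degree v * encodeWalk G w := by omega
        _ = G.degree v * (encodeWalk G w + 1) := by ring
        _ ≤ G.degree v * walkProd G w := Nat.mul_le_mul_left _ he

lemma encodeWalk_inj : ∀ {v u₁ u₂ : V} (w₁ : G.Walk v u₁) (w₂ : G.Walk v u₂),
    w₁.length = w₂.length → encodeWalk G w₁ = encodeWalk G w₂ →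
    (⟨u₁, w₁⟩ : Σ u : V, G.Walk v u) = ⟨u₂, w₂⟩
  | _, _, _, SimpleGraph.Walk.nil, SimpleGraph.Walk.nil, _, _ => rfl
  | v, _, _, @SimpleGraph.Walk.cons _ _ _ x₁ u₁ h₁ w₁,
      @SimpleGraph.Walk.cons _ _ _ x₂ u₂ h₂ w₂, hlen, henc => by
      have hx₁ : x₁ ∈ (G.neighborFinset v).toList :=
        Finset.mem_toList.2 ((G.mem_neighborFinset v x₁).2 h₁)
      have hx₂ : x₂ ∈ (G.neighborFinset v).toList :=
        Finset.mem_toList.2 ((G.mem_neighborFinset v x₂).2 h₂)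
      have hidx₁ : (G.neighborFinset v).toList.idxOf x₁ < G.degree v := by
        have := List.idxOf_lt_length_iff.2 hx₁
        rwa [Finset.length_toList] at this
      have hidx₂ : (G.neighborFinset v).toList.idxOf x₂ < G.degree v := by
        have := List.idxOf_lt_length_iff.2 hx₂
        rwa [Finset.length_toList] at this
      rw [encodeWalk, encodeWalk] at henc
      have hmod : (G.neighborFinset v).toList.idxOf x₁
          = (G.neighborFinset v).toList.idxOf x₂ := by
        have := congrArg (· % G.degree v) henc
        simpa [Nat.add_mul_mod_self_left, Nat.mod_eq_of_lt hidx₁,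
          Nat.mod_eq_of_lt hidx₂] using this
      have hxx : x₁ = x₂ := (List.idxOf_inj hx₁).1 hmod
      subst hxx
      have hdeg : 0 < G.degree v := lt_of_le_of_lt (Nat.zero_le _) hidx₁
      have hdiv : encodeWalk G w₁ = encodeWalk G w₂ := by
        have := congrArg (· / G.degree v) henc
        simpa [Nat.add_mul_div_left _ _ hdeg,
          Nat.div_eq_of_lt hidx₁, Nat.div_eq_of_lt hidx₂] using this
      have hlen' : w₁.length = w₂.length := by
        simpa [SimpleGraph.Walk.length_cons] using hlen
      have := encodeWalk_inj w₁ w₂ hlen' hdiv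
      obtain ⟨rfl, hw⟩ := Sigma.mk.inj_iff.1 this
      rw [eq_of_heq hw]

lemma walkProd_eq : ∀ {v u : V} (w : G.Walk v u),
    walkProd G w = (w.support.dropLast.map (fun x => G.degree x)).prod
  | _, _, SimpleGraph.Walk.nil => by simp [walkProd]
  | v, _, SimpleGraph.Walk.cons h w => by
      rw [walkProd, walkProd_eq w]
      rw [SimpleGraph.Walk.support_cons,
        List.dropLast_cons_of_ne_nil (SimpleGraph.Walk.support_ne_nil w)]
      simp

lemma prod_le_sorted (d : ℕ → ℕ) (hd : Antitone d) :
    ∀ (k : ℕ) (T : Finset ℕ), T.card = k →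
      ∏ j ∈ T, d j ≤ ∏ i ∈ Finset.range k, d i := by
  intro k
  induction k with
  | zero => intro T hT; simp [Finset.card_eq_zero.1 hT]
  | succ k ih =>
    intro T hT
    have hne : T.Nonempty := Finset.card_pos.1 (by omega)
    set m := T.max' hne with hm
    have hmem : m ∈ T := T.max'_mem hne
    have hkm : k ≤ m := by
      have hsub : T ⊆ Finset.range (m + 1) := by
        intro j hj
        exact Finset.mem_range.2 (Nat.lt_succ_of_le (T.le_max' j hj))
      have := Finset.card_le_card hsub
      rw [hT, Finset.card_range] at this
      omega
    have h1 : ∏ j ∈ T, d j = d m * ∏ j ∈ T.erase m, d j :=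
      (Finset.mul_prod_erase T d hmem).symm
    have h2 : (T.erase m).card = k := by
      rw [Finset.card_erase_of_mem hmem, hT]; omega
    calc ∏ j ∈ T, d j = d m * ∏ j ∈ T.erase m, d j := h1
      _ ≤ d k * ∏ i ∈ Finset.range k, d i :=
          Nat.mul_le_mul (hd hkm) (ih _ h2)
      _ = ∏ i ∈ Finset.range (k + 1), d i := by
          rw [Finset.prod_range_succ]; ring

end Aux

theorem stmt_4 {V : Type*} [Fintype V] [DecidableEq V]
    (G : SimpleGraph V) [DecidableRel G.Adj]
    (n : ℕ) (hn : n = Fintype.card V)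
    (d : ℕ → ℕ) (hmono : Antitone d)
    (hdegseq : ∃ σ : V ≃ Fin n, ∀ u : V, G.degree u = d (σ u))
    (v : V) (a : ℕ) (ha : 2 ≤ a) :
    Nat.card {p : Σ u : V, G.Walk v u // p.2.IsPath ∧ p.2.length = a - 1}
      ≤ ∏ i ∈ Finset.range (a - 1), d i := by
  obtain ⟨σ, hσ⟩ := hdegseq
  set D := ∏ i ∈ Finset.range (a - 1), d i with hD
  have key : ∀ (p : {p : Σ u : V, G.Walk v u // p.2.IsPath ∧ p.2.length = a - 1}),
      walkProd G p.1.2 ≤ D := by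
    rintro ⟨⟨u, w⟩, hpath, hlen⟩
    simp only at hpath hlen ⊢
    have hnodup : w.support.dropLast.Nodup :=
      (List.dropLast_sublist _).nodup hpath.support_nodup
    have hlen' : w.support.dropLast.length = a - 1 := by
      rw [List.length_dropLast, SimpleGraph.Walk.length_support, hlen]; omega
    rw [walkProd_eq]
    set L := w.support.dropLast
    have h1 : (L.map (fun x => G.degree x)).prod = ∏ x ∈ L.toFinset, G.degree x :=
      (List.prod_toFinset _ hnodup).symm
    rw [h1]
    have hinj : Function.Injective (fun x : V => (σ x : ℕ)) := fun x y hxy =>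
      σ.injective (Fin.val_injective hxy)
    have h2 : ∏ x ∈ L.toFinset, G.degree x
        = ∏ j ∈ L.toFinset.image (fun x => (σ x : ℕ)), d j := by
      rw [Finset.prod_image (fun x _ y _ hxy => hinj hxy)]
      exact Finset.prod_congr rfl (fun x _ => hσ x)
    rw [h2]
    have h3 : (L.toFinset.image (fun x => (σ x : ℕ))).card = a - 1 := by
      rw [Finset.card_image_of_injective _ hinj,
        List.toFinset_card_of_nodup hnodup, hlen']
    exact prod_le_sorted d hmono (a - 1) _ h3
  have hf : Function.Injective
      (fun p : {p : Σ u : V, G.Walk v u // p.2.IsPath ∧ p.2.length = a - 1} =>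
        (⟨encodeWalk G p.1.2, lt_of_lt_of_le (encodeWalk_lt G p.1.2) (key p)⟩ : Fin D)) := by
    rintro ⟨⟨u₁, w₁⟩, h₁, hl₁⟩ ⟨⟨u₂, w₂⟩, h₂, hl₂⟩ h
    have henc : encodeWalk G w₁ = encodeWalk G w₂ := by
      simpa using congrArg Fin.val h
    have := encodeWalk_inj G w₁ w₂ (by rw [hl₁, hl₂]) henc
    exact Subtype.ext this
  calc Nat.card {p : Σ u : V, G.Walk v u // p.2.IsPath ∧ p.2.length = a - 1}
      ≤ Nat.card (Fin D) := Nat.card_le_card_of_injective _ hf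
    _ = D := by simp
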